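/- Let C, C' be neighbouring columns of D of height t with C to the left of C', and let ℓ_∗ denote the unique left-going line of ℓ(D) labelled ∗ ending at the box C' ∩ R_t. Then every box of D lying in rows R_1,…,R_t in a column from C (inclusive) up to but excluding C' has exactly one right-going line of ℓ(D) labelled 1, whose right end-point lies in rows R_1,…,R_t in a column strictly to the right of C up to and including C', unless the right-going line of ℓ(D) issuing from that box is the line ℓ_∗ (labelled ∗). -/

import Mathlib

open scoped Classical

/-- height of column `j` of the diagram (columns numbered from 1). -/
def hgt (c : List ℕ) (j : ℕ) : ℕ := c.getD (j - 1) 0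

/-- number of boxes in the columns strictly to the left of column `j`. -/
def off (c : List ℕ) (j : ℕ) : ℕ := (c.take (j - 1)).sum

/-- `(i, j)` (row `i`, column `j`) is a box of the diagram `D`. -/
def IsBox (c : List ℕ) (i j : ℕ) : Prop :=
  1 ≤ j ∧ j ≤ c.length ∧ 1 ≤ i ∧ i ≤ hgt c j

/-- the entry of the box `(i, j)` in the tableau `T`. -/
def Tentry (c : List ℕ) (i j : ℕ) : ℕ := off c j + i

/-- the column of the box of `D` carrying entry `m` in `T`. -/
noncomputable def colOf (c : List ℕ) (m : ℕ) : ℕ := sInf {j | m ≤ (c.take j).sum}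

/-- the row of the box of `D` carrying entry `m` in `T`. -/
noncomputable def rowOf (c : List ℕ) (m : ℕ) : ℕ := m - off c (colOf c m)

/-- the total order `≼` on entries: increasing down columns, then from right to left. -/
def ple (c : List ℕ) (a b : ℕ) : Prop :=
  colOf c b < colOf c a ∨ (colOf c a = colOf c b ∧ a ≤ b)

/-- the strict version of `≼`. -/
def plt (c : List ℕ) (a b : ℕ) : Prop :=
  colOf c b < colOf c a ∨ (colOf c a = colOf c b ∧ a < b)

/-- column `j` has a left neighbour in `D`. -/
def HasLeftNb (c : List ℕ) (j : ℕ) : Prop :=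
  ∃ i, 1 ≤ i ∧ i < j ∧ hgt c i = hgt c j ∧
    ∀ i', i < i' → i' < j → hgt c i' ≠ hgt c j

/-- the `j`-th column of the tableau `T`, rows to optional entries. -/
def Tcol (c : List ℕ) (j : ℕ) : ℕ → Option ℕ := fun i =>
  if 1 ≤ i ∧ i ≤ hgt c j then some (Tentry c i j) else none

/-- one step of the propagation rule building `T(∞)`: the entry (if any) in row `t`
of column `j - 1` of `T(∞)` (given by `prev`) is propagated into the partially
built column `j` (given by `cur`). -/
noncomputable def propStep (c : List ℕ) (j : ℕ) (prev : ℕ → Option ℕ)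
    (cur : ℕ → Option ℕ) (t : ℕ) : ℕ → Option ℕ :=
  match prev t with
  | none => cur
  | some l =>
    if hgt c j = t then
      if HasLeftNb c j ∧ cur (t + 1) = none then
        Function.update cur (t + 1) (some l)
      else cur
    else
      if cur t = none then Function.update cur t (some l) else cur

/-- the `j`-th column of the composition tableau `T(∞)`. -/
noncomputable def TinfCol (c : List ℕ) : ℕ → ℕ → Option ℕ
  | 0 => fun _ => none
  | 1 => Tcol c 1
  | j + 2 =>
      (List.range (c.sum + 2)).foldl
        (propStep c (j + 2) (TinfCol c (j + 1))) (Tcol c (j + 2))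

/-- labels of lines: `1` or `∗`. -/
inductive Lab : Type
  | one : Lab
  | star : Lab
deriving DecidableEq

/-- maximal height among the columns `1, …, j - 1`. -/
def maxHgt (c : List ℕ) (j : ℕ) : ℕ := (c.take (j - 1)).foldr max 0

/-- the maximal column height of the diagram `D`. -/
def maxH (c : List ℕ) : ℕ := c.foldr max 0

/-- `LineB c a i j lab` : the line family `ℓ(D)` contains a line labelled `lab`
whose left end-point is the box of `D` carrying entry `a` in `T` and whose right
end-point is the box `(i, j)` (row `i` of column `C_j`). -/
def LineB (c : List ℕ) (a i j : ℕ) (lab : Lab) : Prop :=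
  2 ≤ j ∧ j ≤ c.length ∧ 1 ≤ i ∧
    (match lab with
     | Lab.one =>
         (maxHgt c j < hgt c j ∧ i ≤ maxHgt c j + 1 ∧ TinfCol c (j - 1) i = some a)
       ∨ (hgt c j ≤ maxHgt c j ∧ i + 1 ≤ hgt c j ∧ TinfCol c (j - 1) i = some a)
       ∨ (hgt c j ≤ maxHgt c j ∧ i = hgt c j ∧
           ¬(∃ j', 1 ≤ j' ∧ j' < j ∧ hgt c j' = hgt c j) ∧
           TinfCol c (j - 1) i = some a)
       ∨ (hgt c j ≤ maxHgt c j ∧ i = hgt c j ∧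
           (∃ j', 1 ≤ j' ∧ j' < j ∧ hgt c j' = hgt c j) ∧
           TinfCol c (j - 1) (i + 1) = some a)
     | Lab.star =>
         hgt c j ≤ maxHgt c j ∧ i = hgt c j ∧
           (∃ j', 1 ≤ j' ∧ j' < j ∧ hgt c j' = hgt c j) ∧
           TinfCol c (j - 1) i = some a)

/-- `LineE c a b lab` : `ℓ(D)` contains a line labelled `lab` joining the box of `D`
carrying entry `a` in `T` (on the left) to the box carrying entry `b` (on the right). -/
def LineE (c : List ℕ) (a b : ℕ) (lab : Lab) : Prop :=
  ∃ i j, LineB c a i j lab ∧ b = Tentry c i j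

/-- the box `(i, j)` of `D` is right extremal relative to `ℓ(D)`. -/
def RExt (c : List ℕ) (i j : ℕ) : Prop :=
  IsBox c i j ∧ ∀ i' j', ¬ LineB c (Tentry c i j) i' j' Lab.one

/-- `c` is a composition of `n`. -/
def IsComposition (c : List ℕ) (n : ℕ) : Prop :=
  c.sum = n ∧ ∀ x ∈ c, 0 < x

-- list lemmas
lemma sum_take_succ' (l : List ℕ) : ∀ m : ℕ, (l.take (m+1)).sum = (l.take m).sum + l.getD m 0 := by
  induction l with
  | nil => intro m; simp
  | cons x xs ih =>
    intro m
    cases m with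
    | zero => simp
    | succ m => simp only [List.take_succ_cons, List.sum_cons, List.getD_cons_succ, ih m]; ring

lemma sum_take_mono (l : List ℕ) {m m' : ℕ} (h : m ≤ m') : (l.take m).sum ≤ (l.take m').sum := by
  induction m' with
  | zero => simp_all
  | succ m' ih =>
    rcases Nat.lt_or_ge m (m'+1) with h' | h'
    · exact le_trans (ih (Nat.lt_succ_iff.mp h')) (by rw [sum_take_succ']; omega)
    · have : m = m' + 1 := le_antisymm h h'
      simp [this]

lemma getD_le_sum (l : List ℕ) (i : ℕ) : l.getD i 0 ≤ l.sum := by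
  by_cases h : i < l.length
  · rw [List.getD_eq_getElem l 0 h]
    exact List.le_sum_of_mem (l.getElem_mem h)
  · rw [List.getD_eq_default l 0 (le_of_not_gt h)]
    exact Nat.zero_le _

lemma foldr_max_le_iff (l : List ℕ) (b : ℕ) : l.foldr max 0 ≤ b ↔ ∀ x ∈ l, x ≤ b := by
  induction l with
  | nil => simp
  | cons x xs ih => simp [Nat.max_le, ih]

lemma le_foldr_max {l : List ℕ} {x : ℕ} (h : x ∈ l) : x ≤ l.foldr max 0 :=
  (foldr_max_le_iff l _).mp le_rfl x h

-- basic facts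
lemma hgt_le_sum (c : List ℕ) (j : ℕ) : hgt c j ≤ c.sum := getD_le_sum c (j-1)

lemma off_succ (c : List ℕ) (j : ℕ) (h1 : 1 ≤ j) : off c (j+1) = off c j + hgt c j := by
  have : j + 1 - 1 = (j - 1) + 1 := by omega
  rw [off, this, sum_take_succ']; rfl

lemma hgt_le_maxHgt (c : List ℕ) {j' j : ℕ} (h1 : 1 ≤ j') (h2 : j' < j) :
    hgt c j' ≤ maxHgt c j := by
  by_cases h : j' - 1 < c.length
  · refine le_foldr_max ?_
    rw [List.mem_take_iff_getElem]
    exact ⟨j' - 1, by omega, (List.getD_eq_getElem c 0 h).symm⟩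
  · rw [hgt, List.getD_eq_default c 0 (le_of_not_gt h)]
    exact Nat.zero_le _

lemma maxHgt_mono (c : List ℕ) {m m' : ℕ} (h : m ≤ m') : maxHgt c m ≤ maxHgt c m' := by
  rw [maxHgt, foldr_max_le_iff]
  intro x hx
  refine le_foldr_max ?_
  exact (List.take_prefix_take_left (by omega : m - 1 ≤ m' - 1)).subset hx

lemma hasLeftNb_iff (c : List ℕ) (j : ℕ) :
    HasLeftNb c j ↔ ∃ j', 1 ≤ j' ∧ j' < j ∧ hgt c j' = hgt c j := by
  constructor
  · rintro ⟨i, h1, h2, h3, _⟩; exact ⟨i, h1, h2, h3⟩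
  · rintro ⟨j', h1, h2, h3⟩
    classical
    set P : ℕ → Prop := fun x => 1 ≤ x ∧ hgt c x = hgt c j with hP
    set x := Nat.findGreatest P (j - 1) with hx
    have hPx : P x := Nat.findGreatest_spec (P := P) (by omega) ⟨h1, h3⟩
    have hxle : x ≤ j - 1 := Nat.findGreatest_le _
    refine ⟨x, hPx.1, by omega, hPx.2, fun i' hlt hlt' hne => ?_⟩
    exact Nat.findGreatest_is_greatest (P := P) hlt (by omega) ⟨by omega, hne⟩


noncomputable def Efun (c : List ℕ) (j : ℕ) (prev : ℕ → Option ℕ) (N r : ℕ) : Option ℕ :=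
  if 1 ≤ r ∧ r ≤ hgt c j then some (Tentry c r j)
  else if hgt c j = r - 1 ∧ HasLeftNb c j ∧ (prev (r - 1)).isSome ∧ r ≤ N then prev (r - 1)
  else if hgt c j < r ∧ r < N then prev r
  else none

lemma foldChar (c : List ℕ) (j : ℕ) (prev : ℕ → Option ℕ) (hp0 : prev 0 = none) :
    ∀ N, (List.range N).foldl (propStep c j prev) (Tcol c j) = fun r => Efun c j prev N r := by
  intro N
  induction N with
  | zero =>
    funext r
    simp only [List.range_zero, List.foldl_nil]
    unfold Efun Tcol
    by_cases h1 : 1 ≤ r ∧ r ≤ hgt c j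
    · rw [if_pos h1, if_pos h1]
    · have h2 : ¬(hgt c j = r - 1 ∧ HasLeftNb c j ∧ (prev (r - 1)).isSome ∧ r ≤ 0) := by
        rintro ⟨-, -, hs, hr0⟩
        have : r = 0 := by omega
        rw [this] at hs; simp [hp0] at hs
      rw [if_neg h1, if_neg h1, if_neg h2, if_neg (by omega : ¬(hgt c j < r ∧ r < 0))]
  | succ N IH =>
    rw [List.range_succ, List.foldl_concat, IH]
    funext r
    have hEN : ∀ r', Efun c j prev N r' = Efun c j prev N r' := fun _ => rfl
    cases hN : prev N with
    | none =>
      -- step does nothing; Efun N r = Efun (N+1) r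
      simp only [propStep, hN]
      unfold Efun
      by_cases h1 : 1 ≤ r ∧ r ≤ hgt c j
      · simp [h1]
      · simp only [if_neg h1]
        by_cases h2 : hgt c j = r - 1 ∧ HasLeftNb c j ∧ (prev (r - 1)).isSome ∧ r ≤ N
        · rw [if_pos h2, if_pos ⟨h2.1, h2.2.1, h2.2.2.1, by omega⟩]
        · rw [if_neg h2]
          by_cases h2' : hgt c j = r - 1 ∧ HasLeftNb c j ∧ (prev (r - 1)).isSome ∧ r ≤ N + 1
          · -- then r = N + 1, but prev (r-1) = prev N = none
            exfalso
            have hrN : r = N + 1 := by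
              rcases h2' with ⟨a, b, c', d⟩
              by_contra hne
              exact h2 ⟨a, b, c', by omega⟩
            rcases h2' with ⟨-, -, hs, -⟩
            rw [hrN] at hs; simp [hN] at hs
          · rw [if_neg h2']
            by_cases h3 : hgt c j < r ∧ r < N
            · rw [if_pos h3, if_pos ⟨h3.1, by omega⟩]
            · rw [if_neg h3]
              by_cases h3' : hgt c j < r ∧ r < N + 1
              · -- r = N, value prev N = none
                have : r = N := by omega
                rw [if_pos h3', this, hN]
              · rw [if_neg h3']
    | some l =>
      simp only [propStep, hN]
      by_cases hh : hgt c j = N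
      · rw [if_pos hh]
        have hcur : Efun c j prev N (N + 1) = none := by
          unfold Efun
          rw [if_neg (by omega), if_neg (by rintro ⟨-, -, -, h⟩; omega),
            if_neg (by rintro ⟨-, h⟩; omega)]
        by_cases hln : HasLeftNb c j
        · rw [if_pos ⟨hln, hcur⟩]
          rw [Function.update_apply]
          by_cases hr : r = N + 1
          · rw [if_pos hr, hr]
            unfold Efun
            rw [if_neg (by omega), if_pos ⟨by omega, hln, by simp [hN], le_rfl⟩]
            simp [hN]
          · rw [if_neg hr]
            unfold Efun
            by_cases h1 : 1 ≤ r ∧ r ≤ hgt c j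
            · simp [h1]
            · rw [if_neg h1, if_neg h1]
              by_cases h2 : hgt c j = r - 1 ∧ HasLeftNb c j ∧ (prev (r - 1)).isSome ∧ r ≤ N
              · rw [if_pos h2, if_pos ⟨h2.1, h2.2.1, h2.2.2.1, by omega⟩]
              · rw [if_neg h2]
                have h2' : ¬(hgt c j = r - 1 ∧ HasLeftNb c j ∧ (prev (r - 1)).isSome ∧ r ≤ N + 1) := by
                  rintro ⟨a, b, c', d⟩
                  have : r = N + 1 := by
                    by_contra hne
                    exact h2 ⟨a, b, c', by omega⟩
                  exact hr this
                rw [if_neg h2']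
                by_cases h3 : hgt c j < r ∧ r < N
                · rw [if_pos h3, if_pos ⟨h3.1, by omega⟩]
                · rw [if_neg h3]
                  have h3' : ¬(hgt c j < r ∧ r < N + 1) := by
                    rintro ⟨ha, hb⟩
                    have : r = N := by omega
                    omega
                  rw [if_neg h3']
        · rw [if_neg (by tauto)]
          unfold Efun
          by_cases h1 : 1 ≤ r ∧ r ≤ hgt c j
          · simp [h1]
          · rw [if_neg h1, if_neg h1]
            by_cases h2 : hgt c j = r - 1 ∧ HasLeftNb c j ∧ (prev (r - 1)).isSome ∧ r ≤ N
            · rw [if_pos h2, if_pos ⟨h2.1, h2.2.1, h2.2.2.1, by omega⟩]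
            · rw [if_neg h2]
              have h2' : ¬(hgt c j = r - 1 ∧ HasLeftNb c j ∧ (prev (r - 1)).isSome ∧ r ≤ N + 1) := by
                rintro ⟨-, hb, -, -⟩; exact hln hb
              rw [if_neg h2']
              by_cases h3 : hgt c j < r ∧ r < N
              · rw [if_pos h3, if_pos ⟨h3.1, by omega⟩]
              · rw [if_neg h3]
                have h3' : ¬(hgt c j < r ∧ r < N + 1) := by
                  rintro ⟨ha, hb⟩
                  have : r = N := by omega
                  omega
                rw [if_neg h3']
      · rw [if_neg hh]
        have hNpos : 1 ≤ N := by
          rcases Nat.eq_zero_or_pos N with h | h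
          · exfalso; rw [h] at hN; rw [hp0] at hN; exact nomatch hN
          · exact h
        by_cases hcur : Efun c j prev N N = none
        · rw [if_pos hcur, Function.update_apply]
          have hNh : hgt c j < N := by
            -- from hcur : not B1 at N, plus hh
            by_contra hle
            have : 1 ≤ N ∧ N ≤ hgt c j := ⟨hNpos, by omega⟩
            unfold Efun at hcur
            rw [if_pos this] at hcur
            exact nomatch hcur
          by_cases hr : r = N
          · rw [if_pos hr, hr]
            unfold Efun
            rw [if_neg (by omega)]
            by_cases h2 : hgt c j = N - 1 ∧ HasLeftNb c j ∧ (prev (N - 1)).isSome ∧ N ≤ N + 1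
            · exfalso
              unfold Efun at hcur
              rw [if_neg (by omega), if_pos ⟨h2.1, h2.2.1, h2.2.2.1, le_rfl⟩] at hcur
              rcases h2 with ⟨-, -, hs, -⟩
              rw [hcur] at hs; exact Bool.noConfusion hs
            · rw [if_neg h2, if_pos ⟨hNh, by omega⟩, hN]
          · rw [if_neg hr]
            unfold Efun
            by_cases h1 : 1 ≤ r ∧ r ≤ hgt c j
            · simp [h1]
            · rw [if_neg h1, if_neg h1]
              by_cases h2 : hgt c j = r - 1 ∧ HasLeftNb c j ∧ (prev (r - 1)).isSome ∧ r ≤ N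
              · rw [if_pos h2, if_pos ⟨h2.1, h2.2.1, h2.2.2.1, by omega⟩]
              · rw [if_neg h2]
                have h2' : ¬(hgt c j = r - 1 ∧ HasLeftNb c j ∧ (prev (r - 1)).isSome ∧ r ≤ N + 1) := by
                  rintro ⟨a, b, c', d⟩
                  have : r = N + 1 := by
                    by_contra hne
                    exact h2 ⟨a, b, c', by omega⟩
                  omega
                rw [if_neg h2']
                by_cases h3 : hgt c j < r ∧ r < N
                · rw [if_pos h3, if_pos ⟨h3.1, by omega⟩]
                · rw [if_neg h3]
                  have h3' : ¬(hgt c j < r ∧ r < N + 1) := by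
                    rintro ⟨ha, hb⟩
                    exact hr (by omega)
                  rw [if_neg h3']
        · rw [if_neg hcur]
          unfold Efun
          by_cases h1 : 1 ≤ r ∧ r ≤ hgt c j
          · simp [h1]
          · rw [if_neg h1, if_neg h1]
            by_cases h2 : hgt c j = r - 1 ∧ HasLeftNb c j ∧ (prev (r - 1)).isSome ∧ r ≤ N
            · rw [if_pos h2, if_pos ⟨h2.1, h2.2.1, h2.2.2.1, by omega⟩]
            · rw [if_neg h2]
              have h2' : ¬(hgt c j = r - 1 ∧ HasLeftNb c j ∧ (prev (r - 1)).isSome ∧ r ≤ N + 1) := by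
                rintro ⟨a, b, c', d⟩
                have hrN : r = N + 1 := by
                  by_contra hne
                  exact h2 ⟨a, b, c', by omega⟩
                rw [hrN] at a; simp at a; omega
              rw [if_neg h2']
              by_cases h3 : hgt c j < r ∧ r < N
              · rw [if_pos h3, if_pos ⟨h3.1, by omega⟩]
              · rw [if_neg h3]
                by_cases h3' : hgt c j < r ∧ r < N + 1
                · -- r = N, and Efun N N ≠ none: contradiction with none branches
                  exfalso
                  have hrN : r = N := by omega
                  unfold Efun at hcur
                  rw [hrN] at h1 h2
                  rw [if_neg h1, if_neg h2, if_neg (by omega)] at hcur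
                  exact hcur rfl
                · rw [if_neg h3']

lemma tinf_zero (c : List ℕ) : ∀ m, TinfCol c m 0 = none := by
  intro m
  induction m using Nat.strong_induction_on with
  | _ m ih =>
    match m with
    | 0 => rfl
    | 1 => simp [TinfCol, Tcol]
    | j + 2 =>
      show (List.range (c.sum + 2)).foldl (propStep c (j+2) (TinfCol c (j+1))) (Tcol c (j+2)) 0 = none
      rw [congrFun (foldChar c (j+2) (TinfCol c (j+1)) (ih (j+1) (by omega)) (c.sum+2)) 0]
      unfold Efun
      rw [if_neg (by omega), if_neg ?_, if_neg (by omega)]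
      rintro ⟨-, -, hs, -⟩
      rw [ih (j+1) (by omega)] at hs
      exact Bool.noConfusion hs

lemma tinf_eq_E (c : List ℕ) {j : ℕ} (h : 2 ≤ j) :
    ∀ r, TinfCol c j r = Efun c j (TinfCol c (j - 1)) (c.sum + 2) r := by
  intro r
  obtain ⟨j', rfl⟩ : ∃ j', j = j' + 2 := ⟨j - 2, by omega⟩
  show (List.range (c.sum + 2)).foldl (propStep c (j'+2) (TinfCol c (j'+1))) (Tcol c (j'+2)) r = _
  rw [congrFun (foldChar c (j'+2) (TinfCol c (j'+1)) (tinf_zero c (j'+1)) (c.sum+2)) r]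
  norm_num

lemma tinf_low (c : List ℕ) {m r : ℕ} (h1 : 1 ≤ m) (h2 : 1 ≤ r) (h3 : r ≤ hgt c m) :
    TinfCol c m r = some (Tentry c r m) := by
  match m with
  | 1 => simp [TinfCol, Tcol, h2, h3]
  | j + 2 =>
    rw [tinf_eq_E c (by omega) r]
    unfold Efun
    rw [if_pos ⟨h2, h3⟩]

lemma tinf_none_of_big (c : List ℕ) {r : ℕ} (h : c.sum + 1 < r) : ∀ m, TinfCol c m r = none := by
  intro m
  have hgtr : ∀ k, hgt c k < r := fun k => by have := hgt_le_sum c k; omega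
  match m with
  | 0 => rfl
  | 1 =>
    show Tcol c 1 r = none
    unfold Tcol
    rw [if_neg (by have := hgtr 1; omega)]
  | j + 2 =>
    rw [tinf_eq_E c (by omega) r]
    unfold Efun
    rw [if_neg (by have := hgtr (j+2); omega), if_neg ?_, if_neg (by omega)]
    rintro ⟨he, -, -, -⟩
    have h1 := hgt_le_sum c (j + 2)
    omega

lemma tinf_high (c : List ℕ) {m r : ℕ} (h2 : 2 ≤ m) (hr : hgt c m < r) (hr2 : r ≤ c.sum + 1) :
    TinfCol c m r = if hgt c m = r - 1 ∧ HasLeftNb c m ∧ (TinfCol c (m-1) (r-1)).isSome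
      then TinfCol c (m-1) (r-1) else TinfCol c (m-1) r := by
  rw [tinf_eq_E c h2 r]
  unfold Efun
  rw [if_neg (by omega)]
  by_cases hS : hgt c m = r - 1 ∧ HasLeftNb c m ∧ (TinfCol c (m-1) (r-1)).isSome
  · rw [if_pos ⟨hS.1, hS.2.1, hS.2.2, by omega⟩, if_pos hS]
  · rw [if_neg (by rintro ⟨a,b,c',-⟩; exact hS ⟨a,b,c'⟩), if_pos ⟨hr, by omega⟩, if_neg hS]

lemma tinf_full (c : List ℕ) : ∀ m, ∀ r : ℕ, 1 ≤ r → (TinfCol c m (r+1)).isSome → (TinfCol c m r).isSome := by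
  intro m
  induction m using Nat.strong_induction_on with
  | _ m ih =>
    intro r h1 hs
    match m with
    | 0 => exact absurd hs (by simp [TinfCol])
    | 1 =>
      unfold TinfCol Tcol at hs ⊢
      rw [if_pos ?_]
      · simp
      · by_contra hcon
        rw [if_neg (by omega)] at hs
        exact Bool.noConfusion hs
    | j + 2 =>
      by_cases hle : r ≤ hgt c (j+2)
      · rw [tinf_low c (by omega) h1 hle]; simp
      · -- r > hgt
        have hrs : r + 1 ≤ c.sum + 1 := by
          by_contra hcon
          rw [tinf_none_of_big c (by omega) (j+2)] at hs
          exact Bool.noConfusion hs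
        rw [tinf_high c (by omega) (by omega) hrs] at hs
        have hnotsh : ¬(hgt c (j+2) = (r+1) - 1 ∧ HasLeftNb c (j+2) ∧ (TinfCol c (j+2-1) ((r+1)-1)).isSome) := by
          rintro ⟨he, -, -⟩; omega
        rw [if_neg hnotsh] at hs
        -- hs : TinfCol c (j+1) (r+1) isSome
        have hprev : (TinfCol c (j+1) r).isSome := ih (j+1) (by omega) r h1 (by simpa using hs)
        rw [tinf_high c (by omega) (by omega) (by omega)]
        by_cases hS : hgt c (j+2) = r - 1 ∧ HasLeftNb c (j+2) ∧ (TinfCol c (j+2-1) (r-1)).isSome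
        · rw [if_pos hS]; exact hS.2.2
        · rw [if_neg hS]; simpa using hprev

lemma tinf_le_off (c : List ℕ) : ∀ m, ∀ r x : ℕ, TinfCol c m r = some x → x ≤ (c.take m).sum := by
  intro m
  induction m using Nat.strong_induction_on with
  | _ m ih =>
    intro r x hx
    match m with
    | 0 => exact absurd hx (by simp [TinfCol])
    | 1 =>
      unfold TinfCol Tcol at hx
      by_cases h1 : 1 ≤ r ∧ r ≤ hgt c 1
      · rw [if_pos h1] at hx
        have hx2 : x = Tentry c r 1 := by injection hx; omega
        have h1sum : (c.take 1).sum = c.getD 0 0 := by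
          have := sum_take_succ' c 0; simpa using this
        have hT : Tentry c r 1 = r := by simp [Tentry, off]
        have hh : hgt c 1 = c.getD 0 0 := rfl
        omega
      · rw [if_neg h1] at hx; exact nomatch hx
    | j + 2 =>
      by_cases hle : 1 ≤ r ∧ r ≤ hgt c (j+2)
      · rw [tinf_low c (by omega) hle.1 hle.2] at hx
        have hxe : x = Tentry c r (j+2) := by injection hx; omega
        rw [hxe]
        have hoff : Tentry c r (j+2) = (c.take (j+1)).sum + r := rfl
        rw [hoff]
        have hs : (c.take (j+2)).sum = (c.take (j+1)).sum + c.getD (j+1) 0 := sum_take_succ' c (j+1)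
        have hh : hgt c (j+2) = c.getD (j+1) 0 := rfl
        omega
      · have hr0 : 1 ≤ r := by
          by_contra h0
          have h00 : r = 0 := by omega
          rw [h00, tinf_zero c (j+2)] at hx; exact nomatch hx
        by_cases hbig : c.sum + 1 < r
        · rw [tinf_none_of_big c hbig (j+2)] at hx; exact nomatch hx
        · have hr : hgt c (j+2) < r := by omega
          have hr2 : r ≤ c.sum + 1 := by omega
          rw [tinf_high c (by omega : 2 ≤ j + 2) hr hr2] at hx
          have hmono : (c.take (j+1)).sum ≤ (c.take (j+2)).sum := sum_take_mono c (by omega)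
          by_cases hS : hgt c (j+2) = r - 1 ∧ HasLeftNb c (j+2) ∧ (TinfCol c (j+2-1) (r-1)).isSome
          · rw [if_pos hS] at hx
            exact le_trans (ih (j+1) (by omega) (r-1) x hx) hmono
          · rw [if_neg hS] at hx
            exact le_trans (ih (j+1) (by omega) r x hx) hmono

lemma tinf_row_le (c : List ℕ) : ∀ m, ∀ r x : ℕ, TinfCol c m r = some x → r ≤ maxHgt c (m+1) + 1 := by
  intro m
  induction m using Nat.strong_induction_on with
  | _ m ih =>
    intro r x hx
    match m with
    | 0 => exact absurd hx (by simp [TinfCol])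
    | 1 =>
      unfold TinfCol Tcol at hx
      by_cases h1 : 1 ≤ r ∧ r ≤ hgt c 1
      · have := hgt_le_maxHgt c (le_refl 1) (by omega : 1 < 1 + 1)
        omega
      · rw [if_neg h1] at hx; exact nomatch hx
    | j + 2 =>
      by_cases hle : 1 ≤ r ∧ r ≤ hgt c (j+2)
      · have := hgt_le_maxHgt c (by omega : 1 ≤ j + 2) (by omega : j + 2 < j + 2 + 1)
        omega
      · have hr0 : 1 ≤ r := by
          by_contra h0
          have h00 : r = 0 := by omega
          rw [h00, tinf_zero c (j+2)] at hx; exact nomatch hx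
        by_cases hbig : c.sum + 1 < r
        · rw [tinf_none_of_big c hbig (j+2)] at hx; exact nomatch hx
        · have hr : hgt c (j+2) < r := by omega
          have hr2 : r ≤ c.sum + 1 := by omega
          rw [tinf_high c (by omega : 2 ≤ j + 2) hr hr2] at hx
          have hmono : maxHgt c (j+1+1) ≤ maxHgt c (j+2+1) := maxHgt_mono c (by omega)
          by_cases hS : hgt c (j+2) = r - 1 ∧ HasLeftNb c (j+2) ∧ (TinfCol c (j+2-1) (r-1)).isSome
          · have := hgt_le_maxHgt c (by omega : 1 ≤ j + 2) (by omega : j + 2 < j + 2 + 1)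
            omega
          · rw [if_neg hS] at hx
            have := ih (j+1) (by omega) r x hx
            omega

noncomputable def traj (c : List ℕ) (i j : ℕ) : ℕ → Option ℕ
  | 0 => some i
  | d + 1 =>
    match traj c i j d with
    | none => none
    | some r =>
      if hgt c (j + d + 1) = r ∧ HasLeftNb c (j + d + 1) then some (r + 1)
      else if hgt c (j + d + 1) < r ∧ ¬(hgt c (j + d + 1) = r - 1 ∧ HasLeftNb c (j + d + 1) ∧ 2 ≤ r)
        then some r
      else none

lemma traj_succ (c : List ℕ) (i j d : ℕ) :
    traj c i j (d + 1) =
      match traj c i j d with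
      | none => none
      | some r =>
        if hgt c (j + d + 1) = r ∧ HasLeftNb c (j + d + 1) then some (r + 1)
        else if hgt c (j + d + 1) < r ∧ ¬(hgt c (j + d + 1) = r - 1 ∧ HasLeftNb c (j + d + 1) ∧ 2 ≤ r)
          then some r
        else none := by
  rfl

lemma traj_succ_none (c : List ℕ) (i j d : ℕ) (h : traj c i j d = none) :
    traj c i j (d + 1) = none := by
  rw [traj_succ, h]

lemma traj_succ_some (c : List ℕ) (i j d r' : ℕ) (h : traj c i j d = some r') :
    traj c i j (d + 1) =
      if hgt c (j + d + 1) = r' ∧ HasLeftNb c (j + d + 1) then some (r' + 1)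
      else if hgt c (j + d + 1) < r' ∧ ¬(hgt c (j + d + 1) = r' - 1 ∧ HasLeftNb c (j + d + 1) ∧ 2 ≤ r')
        then some r'
      else none := by
  rw [traj_succ, h]

lemma traj_pos (c : List ℕ) (i j : ℕ) (h : 1 ≤ i) :
    ∀ d r, traj c i j d = some r → 1 ≤ r := by
  intro d
  induction d with
  | zero => intro r hr; injection hr; omega
  | succ d ih =>
    intro r hr
    cases htd : traj c i j d with
    | none => rw [traj_succ_none c i j d htd] at hr; exact nomatch hr
    | some r' =>
      rw [traj_succ_some c i j d r' htd] at hr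
      have hr' := ih r' htd
      by_cases h1 : hgt c (j + d + 1) = r' ∧ HasLeftNb c (j + d + 1)
      · rw [if_pos h1] at hr; injection hr; omega
      · rw [if_neg h1] at hr
        by_cases h2 : hgt c (j + d + 1) < r' ∧ ¬(hgt c (j + d + 1) = r' - 1 ∧ HasLeftNb c (j + d + 1) ∧ 2 ≤ r')
        · rw [if_pos h2] at hr; injection hr; omega
        · rw [if_neg h2] at hr; exact nomatch hr

lemma traj_le (c : List ℕ) (i j : ℕ) (h : i ≤ c.sum) :
    ∀ d r, traj c i j d = some r → r ≤ c.sum + 1 := by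
  intro d
  induction d with
  | zero => intro r hr; injection hr; omega
  | succ d ih =>
    intro r hr
    cases htd : traj c i j d with
    | none => rw [traj_succ_none c i j d htd] at hr; exact nomatch hr
    | some r' =>
      rw [traj_succ_some c i j d r' htd] at hr
      have hr' := ih r' htd
      by_cases h1 : hgt c (j + d + 1) = r' ∧ HasLeftNb c (j + d + 1)
      · rw [if_pos h1] at hr; injection hr with hh
        have := hgt_le_sum c (j + d + 1)
        omega
      · rw [if_neg h1] at hr
        by_cases h2 : hgt c (j + d + 1) < r' ∧ ¬(hgt c (j + d + 1) = r' - 1 ∧ HasLeftNb c (j + d + 1) ∧ 2 ≤ r')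
        · rw [if_pos h2] at hr; injection hr; omega
        · rw [if_neg h2] at hr; exact nomatch hr

lemma traj_none_mono (c : List ℕ) (i j : ℕ) {d d' : ℕ} (h : d ≤ d')
    (hn : traj c i j d = none) : traj c i j d' = none := by
  induction d' with
  | zero => have h0 : d = 0 := by omega
            rw [h0] at hn; exact hn
  | succ d' ih =>
    rcases Nat.lt_or_ge d (d' + 1) with h' | h'
    · exact traj_succ_none c i j d' (ih (by omega))
    · have h0 : d = d' + 1 := by omega
      rw [← h0]; exact hn

lemma a_le_take (c : List ℕ) (i j : ℕ) (hj1 : 1 ≤ j) (hih : i ≤ hgt c j) :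
    Tentry c i j ≤ (c.take j).sum := by
  have h2 : Tentry c i j = (c.take (j - 1)).sum + i := rfl
  have h3 : (c.take ((j - 1) + 1)).sum = (c.take (j - 1)).sum + c.getD (j - 1) 0 :=
    sum_take_succ' c (j - 1)
  have h4 : (j - 1) + 1 = j := by omega
  have h5 : hgt c j = c.getD (j - 1) 0 := rfl
  rw [h4] at h3
  omega

lemma a_gt_take (c : List ℕ) (i j : ℕ) (hi1 : 1 ≤ i) {m : ℕ} (hm : m < j) :
    (c.take m).sum < Tentry c i j := by
  have h1 : (c.take m).sum ≤ (c.take (j - 1)).sum := sum_take_mono c (by omega)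
  have h2 : Tentry c i j = (c.take (j - 1)).sum + i := rfl
  omega

lemma tinf_self (c : List ℕ) (i j : ℕ)
    (hj1 : 1 ≤ j) (hi1 : 1 ≤ i) (hih : i ≤ hgt c j) :
    ∀ r, TinfCol c j r = some (Tentry c i j) ↔ r = i := by
  intro r
  constructor
  · intro h
    rcases Nat.eq_zero_or_pos r with hr0 | hr0
    · rw [hr0, tinf_zero c j] at h; exact nomatch h
    by_cases hrh : r ≤ hgt c j
    · rw [tinf_low c hj1 hr0 hrh] at h
      have heq : Tentry c r j = Tentry c i j := by injection h
      unfold Tentry at heq; omega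
    · exfalso
      by_cases hbig : c.sum + 1 < r
      · rw [tinf_none_of_big c hbig j] at h; exact nomatch h
      · by_cases hj2 : 2 ≤ j
        · rw [tinf_high c hj2 (by omega) (by omega)] at h
          have hlt : (c.take (j - 1)).sum < Tentry c i j := a_gt_take c i j hi1 (by omega)
          by_cases hS : hgt c j = r - 1 ∧ HasLeftNb c j ∧ (TinfCol c (j-1) (r-1)).isSome
          · rw [if_pos hS] at h
            have := tinf_le_off c (j - 1) (r - 1) _ h
            omega
          · rw [if_neg hS] at h
            have := tinf_le_off c (j - 1) r _ h
            omega
        · have hj : j = 1 := by omega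
          subst hj
          have h1 : TinfCol c 1 r = Tcol c 1 r := rfl
          rw [h1] at h
          unfold Tcol at h
          rw [if_neg (by omega)] at h
          exact nomatch h
  · rintro rfl
    exact tinf_low c hj1 hi1 hih

lemma traj_char (c : List ℕ) (i j : ℕ)
    (hj1 : 1 ≤ j) (hjlen : j ≤ c.length) (hi1 : 1 ≤ i) (hih : i ≤ hgt c j) :
    ∀ d r, TinfCol c (j + d) r = some (Tentry c i j) ↔ traj c i j d = some r := by
  intro d
  induction d with
  | zero =>
    intro r
    rw [show j + 0 = j from rfl, tinf_self c i j hj1 hi1 hih r]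
    show r = i ↔ some i = some r
    constructor
    · rintro rfl; rfl
    · intro h; injection h; omega
  | succ d ih =>
    intro r
    have hJ : j + (d + 1) = j + d + 1 := rfl
    rw [hJ]
    constructor
    · intro hL
      have hr0 : 1 ≤ r := by
        by_contra h0
        rw [show r = 0 by omega, tinf_zero c (j + d + 1)] at hL
        exact nomatch hL
      have hrbig : r ≤ c.sum + 1 := by
        by_contra h0
        rw [tinf_none_of_big c (by omega) (j + d + 1)] at hL
        exact nomatch hL
      have hrh : hgt c (j + d + 1) < r := by
        by_contra h0
        rw [tinf_low c (by omega) hr0 (by omega)] at hL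
        have heq : Tentry c r (j + d + 1) = Tentry c i j := by injection hL
        have h1 : (c.take j).sum ≤ (c.take (j + d)).sum := sum_take_mono c (by omega)
        have h2 : Tentry c r (j + d + 1) = (c.take (j + d)).sum + r := rfl
        have h3 := a_le_take c i j hj1 hih
        omega
      rw [tinf_high c (by omega) hrh hrbig] at hL
      have hm1 : j + d + 1 - 1 = j + d := rfl
      rw [hm1] at hL
      by_cases hS : hgt c (j + d + 1) = r - 1 ∧ HasLeftNb c (j + d + 1) ∧ (TinfCol c (j + d) (r-1)).isSome
      · rw [if_pos hS] at hL
        have hd := (ih (r-1)).mp hL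
        rw [traj_succ_some c i j d (r-1) hd,
          if_pos (⟨hS.1, hS.2.1⟩ : hgt c (j + d + 1) = r - 1 ∧ HasLeftNb c (j + d + 1))]
        congr 1; omega
      · rw [if_neg hS] at hL
        have hd := (ih r).mp hL
        rw [traj_succ_some c i j d r hd]
        have hcond1 : ¬(hgt c (j + d + 1) = r ∧ HasLeftNb c (j + d + 1)) := by
          rintro ⟨h1, -⟩; omega
        rw [if_neg hcond1]
        have hcond2 : hgt c (j + d + 1) < r ∧ ¬(hgt c (j + d + 1) = r - 1 ∧ HasLeftNb c (j + d + 1) ∧ 2 ≤ r) := by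
          refine ⟨hrh, ?_⟩
          rintro ⟨h1, h2, h3⟩
          refine hS ⟨h1, h2, ?_⟩
          exact tinf_full c (j + d) (r - 1) (by omega) (by rw [show r - 1 + 1 = r by omega, hL]; rfl)
        rw [if_pos hcond2]
    · intro hR
      cases htd : traj c i j d with
      | none => rw [traj_succ_none c i j d htd] at hR; exact nomatch hR
      | some r' =>
        rw [traj_succ_some c i j d r' htd] at hR
        have hprev : TinfCol c (j + d) r' = some (Tentry c i j) := (ih r').mpr htd
        have hr'0 : 1 ≤ r' := traj_pos c i j hi1 d r' htd
        have hr'le : r' ≤ c.sum + 1 := by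
          by_contra h0
          rw [tinf_none_of_big c (by omega) (j + d)] at hprev
          exact nomatch hprev
        by_cases h1 : hgt c (j + d + 1) = r' ∧ HasLeftNb c (j + d + 1)
        · rw [if_pos h1] at hR
          have hrr : r = r' + 1 := by injection hR with h; omega
          have hhs := hgt_le_sum c (j + d + 1)
          have hrh : hgt c (j + d + 1) < r := by have := h1.1; omega
          rw [tinf_high c (by omega) hrh (by omega)]
          have hm1 : j + d + 1 - 1 = j + d := rfl
          rw [hm1]
          have hS : hgt c (j + d + 1) = r - 1 ∧ HasLeftNb c (j + d + 1) ∧ (TinfCol c (j + d) (r-1)).isSome := by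
            refine ⟨by have := h1.1; omega, h1.2, ?_⟩
            rw [show r - 1 = r' by omega, hprev]; rfl
          rw [if_pos hS, show r - 1 = r' by omega]
          exact hprev
        · rw [if_neg h1] at hR
          by_cases h2 : hgt c (j + d + 1) < r' ∧ ¬(hgt c (j + d + 1) = r' - 1 ∧ HasLeftNb c (j + d + 1) ∧ 2 ≤ r')
          · rw [if_pos h2] at hR
            have hrr : r = r' := by injection hR with h; omega
            subst hrr
            have hrh : hgt c (j + d + 1) < r := h2.1
            rw [tinf_high c (by omega) hrh (by omega)]
            have hm1 : j + d + 1 - 1 = j + d := rfl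
            rw [hm1]
            have hS : ¬(hgt c (j + d + 1) = r - 1 ∧ HasLeftNb c (j + d + 1) ∧ (TinfCol c (j + d) (r-1)).isSome) := by
              rintro ⟨ha, hb, hc'⟩
              have hr1 : 1 ≤ r - 1 := by
                by_contra h0
                rw [show r - 1 = 0 by omega, tinf_zero c (j + d)] at hc'
                exact Bool.noConfusion hc'
              exact h2.2 ⟨ha, hb, by omega⟩
            rw [if_neg hS]
            exact hprev
          · rw [if_neg h2] at hR; exact nomatch hR

lemma hgt_pos (c : List ℕ) (hcpos : ∀ x ∈ c, 0 < x) {k : ℕ} (h1 : 1 ≤ k) (h2 : k ≤ c.length) :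
    0 < hgt c k := by
  rw [hgt, List.getD_eq_getElem c 0 (by omega)]
  exact hcpos _ (c.getElem_mem (by omega))

lemma presence (c : List ℕ) (i j : ℕ)
    (hj1 : 1 ≤ j) (hjlen : j ≤ c.length) (hi1 : 1 ≤ i) (hih : i ≤ hgt c j) :
    ∀ m r, TinfCol c m r = some (Tentry c i j) ↔ (j ≤ m ∧ traj c i j (m - j) = some r) := by
  intro m r
  by_cases hm : j ≤ m
  · obtain ⟨d, rfl⟩ : ∃ d, m = j + d := ⟨m - j, by omega⟩
    rw [show j + d - j = d by omega]
    rw [traj_char c i j hj1 hjlen hi1 hih d r]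
    exact ⟨fun h => ⟨hm, h⟩, fun h => h.2⟩
  · constructor
    · intro h
      exfalso
      have h1 := tinf_le_off c m r _ h
      have h2 := a_gt_take c i j hi1 (show m < j by omega)
      omega
    · rintro ⟨h, -⟩; omega


/-- let `C = C_p`, `C' = C_q` be neighbouring columns of `D` of height
`tt` with `C` left of `C'`, and `ℓ_∗` the unique left-going `∗`-labelled line of
`ℓ(D)` ending at `C' ∩ R_tt`.  Every box of `D` lying in rows `R_1, …, R_tt` in a
column from `C` (inclusive) up to but excluding `C'`, unless its right-going line
of `ℓ(D)` is the line `ℓ_∗`, has exactly one right-going line of `ℓ(D)` labelled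
`1`, whose right end-point lies in rows `R_1, …, R_tt` in a column strictly to the
right of `C` up to and including `C'`. -/
theorem statement8 (n : ℕ) (hn : 0 < n) (c : List ℕ) (hc : IsComposition c n)
    (p q tt : ℕ) (hp : 1 ≤ p) (hq : q ≤ c.length) (hpq : p < q)
    (hhp : hgt c p = tt) (hhq : hgt c q = tt)
    (hnbr : ∀ j, p < j → j < q → hgt c j ≠ tt) :
    ∀ i j, p ≤ j → j < q → IsBox c i j → i ≤ tt →
      ¬ LineB c (Tentry c i j) tt q Lab.star →
      (∃! x : ℕ × ℕ, LineB c (Tentry c i j) x.1 x.2 Lab.one) ∧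
      (∀ i' j', LineB c (Tentry c i j) i' j' Lab.one →
        i' ≤ tt ∧ p < j' ∧ j' ≤ q) := by
  intro i j hpj hjq hbox hitt hstar
  obtain ⟨hcsum, hcpos⟩ := hc
  obtain ⟨hj1, hjlen, hi1, hih⟩ := hbox
  have hq2 : 2 ≤ q := by omega
  have httpos : 1 ≤ tt := by
    have := hgt_pos c hcpos (show 1 ≤ q by omega) hq
    omega
  have hpres : ∀ m r, TinfCol c m r = some (Tentry c i j) ↔
      (j ≤ m ∧ traj c i j (m - j) = some r) :=
    presence c i j hj1 hjlen hi1 hih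
  -- a stopping point exists at or before column q
  have hexistsstop : ∃ d, j + d + 1 ≤ q ∧ traj c i j (d + 1) = none := by
    by_contra hcon
    push_neg at hcon
    have hclaim : ∀ d, j + d < q → ∃ r, traj c i j d = some r ∧ r ≤ tt := by
      intro d
      induction d with
      | zero => intro _; exact ⟨i, rfl, hitt⟩
      | succ d ihd =>
        intro hlt
        obtain ⟨r, hr, hrtt⟩ := ihd (by omega)
        have hne := hcon d (by omega)
        rw [traj_succ_some c i j d r hr] at hne ⊢
        by_cases h1 : hgt c (j + d + 1) = r ∧ HasLeftNb c (j + d + 1)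
        · rw [if_pos h1]
          refine ⟨r + 1, rfl, ?_⟩
          have hne' : hgt c (j + d + 1) ≠ tt := hnbr (j + d + 1) (by omega) (by omega)
          have := h1.1
          omega
        · rw [if_neg h1] at hne ⊢
          by_cases h2 : hgt c (j + d + 1) < r ∧
              ¬(hgt c (j + d + 1) = r - 1 ∧ HasLeftNb c (j + d + 1) ∧ 2 ≤ r)
          · rw [if_pos h2]; exact ⟨r, rfl, hrtt⟩
          · rw [if_neg h2] at hne; exact (hne rfl).elim
    obtain ⟨r, hr, hrtt⟩ := hclaim (q - 1 - j) (by omega)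
    have hcol : j + (q - 1 - j) + 1 = q := by omega
    have hne := hcon (q - 1 - j) (by omega)
    rw [traj_succ_some c i j _ r hr, hcol] at hne
    by_cases h1 : hgt c q = r ∧ HasLeftNb c q
    · have hrtt' : r = tt := by rw [hhq] at h1; omega
      apply hstar
      have hT : TinfCol c (q - 1) tt = some (Tentry c i j) := by
        have hT0 := (traj_char c i j hj1 hjlen hi1 hih (q - 1 - j) tt).mpr (by rw [← hrtt']; exact hr)
        rw [show j + (q - 1 - j) = q - 1 by omega] at hT0
        exact hT0
      refine ⟨hq2, hq, httpos, ?_, hhq.symm, ⟨p, hp, hpq, by rw [hhp, hhq]⟩, hT⟩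
      have hmle := hgt_le_maxHgt c hp hpq
      rw [hhp] at hmle
      rw [hhq]
      exact hmle
    · rw [if_neg h1] at hne
      have h2 : ¬(hgt c q < r ∧ ¬(hgt c q = r - 1 ∧ HasLeftNb c q ∧ 2 ≤ r)) := by
        rintro ⟨hlt', -⟩
        rw [hhq] at hlt'
        omega
      rw [if_neg h2] at hne
      exact hne rfl
  have hex : ∃ d, traj c i j (d + 1) = none := ⟨hexistsstop.choose, hexistsstop.choose_spec.2⟩
  set d0 := Nat.find hex with hd0def
  have h0 : traj c i j (d0 + 1) = none := Nat.find_spec hex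
  have hmin : ∀ d < d0, traj c i j (d + 1) ≠ none := fun d hd => Nat.find_min hex hd
  have hd0q : j + d0 + 1 ≤ q := by
    obtain ⟨d, hdq, hdn⟩ := hexistsstop
    have := Nat.find_min' hex hdn
    omega
  have hsome : ∀ d ≤ d0, ∃ r, traj c i j d = some r := by
    intro d hd
    cases d with
    | zero => exact ⟨i, rfl⟩
    | succ d =>
      have hne := hmin d (by omega)
      cases h : traj c i j (d + 1) with
      | none => exact absurd h hne
      | some r => exact ⟨r, rfl⟩
  obtain ⟨r0, hr0⟩ := hsome d0 le_rfl
  have hnone_after : ∀ d, d0 < d → traj c i j d = none := fun d hd =>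
    traj_none_mono c i j (show d0 + 1 ≤ d by omega) h0
  have hrowle : ∀ d, d ≤ d0 → ∀ r, traj c i j d = some r → r ≤ tt := by
    intro d
    induction d with
    | zero => intro _ r hr; injection hr with h; omega
    | succ d ihd =>
      intro hd r hr
      obtain ⟨r', hr'⟩ := hsome d (by omega)
      have hr'tt := ihd (by omega) r' hr'
      rw [traj_succ_some c i j d r' hr'] at hr
      by_cases h1 : hgt c (j + d + 1) = r' ∧ HasLeftNb c (j + d + 1)
      · rw [if_pos h1] at hr
        injection hr with hh
        have hne' : hgt c (j + d + 1) ≠ tt := hnbr (j + d + 1) (by omega) (by omega)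
        have := h1.1
        omega
      · rw [if_neg h1] at hr
        by_cases h2 : hgt c (j + d + 1) < r' ∧
            ¬(hgt c (j + d + 1) = r' - 1 ∧ HasLeftNb c (j + d + 1) ∧ 2 ≤ r')
        · rw [if_pos h2] at hr; injection hr with hh; omega
        · rw [if_neg h2] at hr; exact nomatch hr
  have hr0tt : r0 ≤ tt := hrowle d0 le_rfl r0 hr0
  have hr0pos : 1 ≤ r0 := traj_pos c i j hi1 d0 r0 hr0
  set j1 := j + d0 + 1 with hj1def
  have hC1 : ¬(hgt c j1 = r0 ∧ HasLeftNb c j1) := by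
    intro hC
    rw [traj_succ_some c i j d0 r0 hr0, if_pos hC] at h0
    exact nomatch h0
  have hC2 : ¬(hgt c j1 < r0 ∧ ¬(hgt c j1 = r0 - 1 ∧ HasLeftNb c j1 ∧ 2 ≤ r0)) := by
    intro hC
    rw [traj_succ_some c i j d0 r0 hr0, if_neg hC1, if_pos hC] at h0
    exact nomatch h0
  have hpres0 : TinfCol c (j1 - 1) r0 = some (Tentry c i j) := by
    have := (traj_char c i j hj1 hjlen hi1 hih d0 r0).mpr hr0
    rw [show j1 - 1 = j + d0 from rfl]
    exact this
  set i0 := if hgt c j1 < r0 then hgt c j1 else r0 with hi0def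
  have hi0tt : i0 ≤ tt := by
    rw [hi0def]; split <;> omega
  have hline : LineB c (Tentry c i j) i0 j1 Lab.one := by
    by_cases hcase : hgt c j1 < r0
    · -- bump stop
      have hbump : hgt c j1 = r0 - 1 ∧ HasLeftNb c j1 ∧ 2 ≤ r0 := by
        by_contra hb; exact hC2 ⟨hcase, hb⟩
      have hex' : ∃ j'', 1 ≤ j'' ∧ j'' < j1 ∧ hgt c j'' = hgt c j1 :=
        (hasLeftNb_iff c j1).mp hbump.2.1
      have hhM : hgt c j1 ≤ maxHgt c j1 := by
        obtain ⟨j'', hj''1, hj''2, hj''3⟩ := hex'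
        rw [← hj''3]
        exact hgt_le_maxHgt c hj''1 hj''2
      have hi0 : i0 = hgt c j1 := if_pos hcase
      refine ⟨by omega, by omega, by omega, Or.inr (Or.inr (Or.inr ⟨hhM, hi0, hex', ?_⟩))⟩
      rw [show i0 + 1 = r0 by omega]
      exact hpres0
    · -- wall stop
      have hr0le : r0 ≤ hgt c j1 := by omega
      have hi0 : i0 = r0 := if_neg hcase
      by_cases hM : maxHgt c j1 < hgt c j1
      · have hrle : r0 ≤ maxHgt c j1 + 1 := by
          have := tinf_row_le c (j + d0) r0 _ hpres0
          exact this
        exact ⟨by omega, by omega, by omega, Or.inl ⟨hM, by omega, by rw [hi0]; exact hpres0⟩⟩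
      · by_cases heq : r0 = hgt c j1
        · have hnln : ¬HasLeftNb c j1 := fun h => hC1 ⟨heq.symm, h⟩
          have hnex : ¬(∃ j'', 1 ≤ j'' ∧ j'' < j1 ∧ hgt c j'' = hgt c j1) := fun h =>
            hnln ((hasLeftNb_iff c j1).mpr h)
          exact ⟨by omega, by omega, by omega,
            Or.inr (Or.inr (Or.inl ⟨by omega, by omega, hnex, by rw [hi0]; exact hpres0⟩))⟩
        · exact ⟨by omega, by omega, by omega,
            Or.inr (Or.inl ⟨by omega, by omega, by rw [hi0]; exact hpres0⟩)⟩
  have huniq : ∀ i' j', LineB c (Tentry c i j) i' j' Lab.one → i' = i0 ∧ j' = j1 := by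
    intro i' j' hL
    obtain ⟨hj'2, hj'len, hi'1, hD⟩ := hL
    -- extract the presence row x
    have hxfact : ∃ x, TinfCol c (j' - 1) x = some (Tentry c i j) ∧
        ((x = i' ∧ ((maxHgt c j' < hgt c j' ∧ i' ≤ maxHgt c j' + 1) ∨
                    (hgt c j' ≤ maxHgt c j' ∧ i' + 1 ≤ hgt c j') ∨
                    (hgt c j' ≤ maxHgt c j' ∧ i' = hgt c j' ∧
                      ¬(∃ j'', 1 ≤ j'' ∧ j'' < j' ∧ hgt c j'' = hgt c j')))) ∨
         (x = i' + 1 ∧ hgt c j' ≤ maxHgt c j' ∧ i' = hgt c j' ∧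
            (∃ j'', 1 ≤ j'' ∧ j'' < j' ∧ hgt c j'' = hgt c j'))) := by
      rcases hD with ⟨h1, h2, h3⟩ | ⟨h1, h2, h3⟩ | ⟨h1, h2, h3, h4⟩ | ⟨h1, h2, h3, h4⟩
      · exact ⟨i', h3, Or.inl ⟨rfl, Or.inl ⟨h1, h2⟩⟩⟩
      · exact ⟨i', h3, Or.inl ⟨rfl, Or.inr (Or.inl ⟨h1, h2⟩)⟩⟩
      · exact ⟨i', h4, Or.inl ⟨rfl, Or.inr (Or.inr ⟨h1, h2, h3⟩)⟩⟩
      · exact ⟨i' + 1, h4, Or.inr ⟨rfl, h1, h2, h3⟩⟩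
    obtain ⟨x, hx, hcases⟩ := hxfact
    obtain ⟨hjle, htrajx⟩ := (hpres (j' - 1) x).mp hx
    set d' := j' - 1 - j with hd'def
    have hj'eq : j' = j + d' + 1 := by omega
    have htrajx' : traj c i j d' = some x := htrajx
    have hd'le : d' ≤ d0 := by
      by_contra hgt'
      rw [hnone_after d' (by omega)] at htrajx'
      exact nomatch htrajx'
    have hxpos : 1 ≤ x := traj_pos c i j hi1 d' x htrajx'
    -- d' = d0
    have hd'eq : d' = d0 := by
      by_contra hne
      have hlt : d' < d0 := by omega
      have hneN := hmin d' hlt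
      rw [traj_succ_some c i j d' x htrajx'] at hneN
      rw [← hj'eq] at hneN
      have hsurv : (hgt c j' = x ∧ HasLeftNb c j') ∨
          (hgt c j' < x ∧ ¬(hgt c j' = x - 1 ∧ HasLeftNb c j' ∧ 2 ≤ x)) := by
        by_contra hcon
        obtain ⟨ha, hb⟩ := not_or.mp hcon
        rw [if_neg ha, if_neg hb] at hneN
        exact hneN rfl
      -- derive contradiction from each LineB case
      rcases hcases with ⟨rfl, hsub⟩ | ⟨hxe, h1, h2, h3⟩
      · rcases hsub with ⟨h1, h2⟩ | ⟨h1, h2⟩ | ⟨h1, h2, h3⟩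
        · -- tall column case
          rcases hsurv with ⟨ha, hb⟩ | ⟨ha, hb⟩
          · obtain ⟨j'', hj''1, hj''2, hj''3⟩ := (hasLeftNb_iff c j').mp hb
            have := hgt_le_maxHgt c hj''1 hj''2
            omega
          · omega
        · rcases hsurv with ⟨ha, hb⟩ | ⟨ha, hb⟩ <;> omega
        · rcases hsurv with ⟨ha, hb⟩ | ⟨ha, hb⟩
          · exact h3 ((hasLeftNb_iff c j').mp hb)
          · omega
      · -- case 4
        rcases hsurv with ⟨ha, hb⟩ | ⟨ha, hb⟩
        · omega
        · apply hb
          obtain ⟨j'', hj''1, hj''2, hj''3⟩ := id h3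
          have hj''pos : 0 < hgt c j'' := hgt_pos c hcpos hj''1 (by omega)
          refine ⟨by omega, (hasLeftNb_iff c j').mpr h3, by omega⟩
    have hj'j1 : j' = j1 := by rw [hj'eq, hd'eq]
    have hxr0 : x = r0 := by
      rw [hd'eq] at htrajx'
      rw [htrajx'] at hr0
      injection hr0
    refine ⟨?_, hj'j1⟩
    rw [hj'j1] at hcases
    rcases hcases with ⟨hxe, hsub⟩ | ⟨hxe, h1, h2, h3⟩
    · -- i' = x = r0 in cases 1-3 ; show i0 = r0
      have hxi : i' = r0 := by omega
      rcases hsub with ⟨h1, h2⟩ | ⟨h1, h2⟩ | ⟨h1, h2, h3⟩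
      · -- tall column: show ¬(hgt c j1 < r0)
        have hnb : ¬(hgt c j1 < r0) := by
          intro hcase
          have hbump : hgt c j1 = r0 - 1 ∧ HasLeftNb c j1 ∧ 2 ≤ r0 := by
            by_contra hb; exact hC2 ⟨hcase, hb⟩
          obtain ⟨j'', hj''1, hj''2, hj''3⟩ := (hasLeftNb_iff c j1).mp hbump.2.1
          have := hgt_le_maxHgt c hj''1 hj''2
          omega
        rw [hi0def, if_neg hnb]; omega
      · have hnb : ¬(hgt c j1 < r0) := by omega
        rw [hi0def, if_neg hnb]; omega
      · have hnb : ¬(hgt c j1 < r0) := by omega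
        rw [hi0def, if_neg hnb]; omega
    · -- case 4 : i' = hgt c j1, x = i' + 1 = r0
      have hb : hgt c j1 < r0 := by omega
      rw [hi0def, if_pos hb]; omega
  constructor
  · refine ⟨(i0, j1), hline, ?_⟩
    rintro ⟨yi, yj⟩ hy
    obtain ⟨e1, e2⟩ := huniq yi yj hy
    simp [e1, e2]
  · intro i' j' hL
    obtain ⟨e1, e2⟩ := huniq i' j' hL
    refine ⟨by omega, by omega, by omega⟩
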